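/- Let (c_i)_{i≥1} be the real sequence with c₁ = 1/4, c₂ = 1/6, c₃ = −1/12 satisfying c_i = c_{i−1} − c_{i−2} + (1/3)c_{i−3} for i ≥ 4, and set β_i := (i+1)·c_i. Then for every x ∈ [0,1] the series Σ_{i=1}^∞ β_i x^i converges absolutely, and its sum equals q(x) = (3/2)·x(3 − x(3 − x)) / (3 − x(3 − x(3 − x)))². -/

import Mathlib

set_option maxHeartbeats 1600000

/-- Auxiliary "error term" polynomial appearing in the partial-sum identity. -/
noncomputable def auxE (β : ℕ → ℝ) (x : ℝ) (n : ℕ) : ℝ :=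
  -(9*β (n+1)
    + x*(9*β (n+2) - 18*β (n+1))
    + x^2*(9*β (n+3) - 18*β (n+2) + 27*β (n+1))
    + x^3*(9*β (n+4) - 18*β (n+3) + 27*β (n+2) - 24*β (n+1))
    + x^4*(9*β (n+5) - 18*β (n+4) + 27*β (n+3) - 24*β (n+2) + 15*β (n+1))
    + x^5*(9*β (n+6) - 18*β (n+5) + 27*β (n+4) - 24*β (n+3) + 15*β (n+2) - 6*β (n+1)))

/-- Auxiliary Lyapunov quadratic form used to verify geometric decay of `c`. -/
noncomputable def auxV (c : ℕ → ℝ) (m : ℕ) : ℝ :=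
  (699/20)*c (m+3)^2 + (2387/60)*c (m+2)^2 + (29/5)*c (m+1)^2
    - (1417/30)*c (m+3)*c (m+2) + (28/3)*c (m+3)*c (m+1) - (374/15)*c (m+2)*c (m+1)

/-- With `β_i = (i+1) c_i`, where `(c_i)` solves the recursion
`c_i = c_{i-1} - c_{i-2} + c_{i-3}/3` with `c₁ = 1/4`, `c₂ = 1/6`, `c₃ = -1/12`,
the power series `Σ_{i≥1} β_i x^i` converges absolutely on `[0,1]` with sum
`q(x) = (3/2) x (3 - x(3-x)) / (3 - x(3 - x(3-x)))²`. -/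
theorem bs4_limit_density_series
    (c : ℕ → ℝ) (hc1 : c 1 = 1 / 4) (hc2 : c 2 = 1 / 6) (hc3 : c 3 = -(1 / 12))
    (hrec : ∀ i, 4 ≤ i → c i = c (i - 1) - c (i - 2) + (1 / 3) * c (i - 3))
    (β : ℕ → ℝ) (hβ : ∀ i, β i = ((i : ℝ) + 1) * c i) :
    ∀ x ∈ Set.Icc (0 : ℝ) 1,
      Summable (fun i : ℕ => |β (i + 1) * x ^ (i + 1)|)
      ∧ ∑' i : ℕ, β (i + 1) * x ^ (i + 1)
          = (3 / 2) * (x * (3 - x * (3 - x))) / (3 - x * (3 - x * (3 - x))) ^ 2 := by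
  -- clean form of the recursion
  have hr : ∀ m : ℕ, c (m + 4) = c (m+3) - c (m+2) + (1/3) * c (m+1) := by
    intro m
    have h := hrec (m+4) (by omega)
    have e1 : m + 4 - 1 = m + 3 := by omega
    have e2 : m + 4 - 2 = m + 2 := by omega
    have e3 : m + 4 - 3 = m + 1 := by omega
    rwa [e1, e2, e3] at h
  -- Lyapunov contraction
  have hVstep : ∀ m : ℕ, auxV c (m+1) ≤ (81/100) * auxV c m := by
    intro m
    have h := hr m
    simp only [auxV]
    rw [show m+1+3 = m+4 from by omega, show m+1+2 = m+3 from by omega,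
        show m+1+1 = m+2 from by omega, h]
    nlinarith [sq_nonneg (c (m+3) + c (m+2)), sq_nonneg (c (m+3) + c (m+1)),
      sq_nonneg (c (m+2) - c (m+1)), sq_nonneg (c (m+3)), sq_nonneg (c (m+2)),
      sq_nonneg (c (m+1))]
  have hV0 : auxV c 0 = 3263/2880 := by
    simp only [auxV]
    norm_num [hc1, hc2, hc3]
  have hVdecay : ∀ m : ℕ, auxV c m ≤ (3263/2880) * (81/100)^m := by
    intro m
    induction m with
    | zero => simp [hV0]
    | succ m ih =>
        calc auxV c (m+1) ≤ (81/100) * auxV c m := hVstep m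
          _ ≤ (81/100) * ((3263/2880) * (81/100)^m) := by nlinarith
          _ = (3263/2880) * (81/100)^(m+1) := by ring
  have hsq : ∀ m : ℕ, c (m+3)^2 ≤ 2 * auxV c m := by
    intro m
    simp only [auxV]
    nlinarith [sq_nonneg (2067*c (m+3) - 1417*c (m+2) + 280*c (m+1)),
      sq_nonneg (56270*c (m+2) - 22103*c (m+1)), sq_nonneg (c (m+1))]
  have hc3b : ∀ m : ℕ, |c (m+3)| ≤ 2 * (9/10:ℝ)^m := by
    intro m
    have h1 : c (m+3)^2 ≤ 2 * ((3263/2880) * (81/100)^m) := by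
      have := hsq m; have := hVdecay m; nlinarith
    have h2 : ((9:ℝ)/10)^m * (9/10:ℝ)^m = (81/100:ℝ)^m := by
      rw [← mul_pow]; norm_num
    have h3 : (0:ℝ) < (9/10:ℝ)^m := by positivity
    nlinarith [sq_abs (c (m+3)), abs_nonneg (c (m+3))]
  have hcb : ∀ n : ℕ, |c (n+1)| ≤ 3 * (9/10:ℝ)^n := by
    intro n
    match n with
    | 0 => rw [hc1, abs_of_nonneg (by norm_num : (0:ℝ) ≤ 1/4)]; norm_num
    | 1 => rw [hc2, abs_of_nonneg (by norm_num : (0:ℝ) ≤ 1/6)]; norm_num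
    | (m+2) =>
        have h := hc3b m
        have h3 : (0:ℝ) ≤ (9/10:ℝ)^m := by positivity
        have e : m + 2 + 1 = m + 3 := by omega
        rw [e]
        calc |c (m+3)| ≤ 2 * (9/10:ℝ)^m := h
          _ ≤ 3 * (9/10:ℝ)^(m+2) := by rw [pow_succ, pow_succ]; nlinarith
  have hβb : ∀ n : ℕ, |β (n+1)| ≤ (3*(n:ℝ)+6) * (9/10:ℝ)^n := by
    intro n
    rw [hβ, abs_mul]
    have h1 : |((n+1:ℕ):ℝ) + 1| = (n:ℝ) + 2 := by
      rw [abs_of_nonneg (by positivity)]; push_cast; ring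
    rw [h1]
    have h2 := hcb n
    have h3 : (0:ℝ) ≤ (9/10:ℝ)^n := by positivity
    nlinarith [abs_nonneg (c (n+1))]
  -- uniform bound for β (n+k), 1 ≤ k ≤ 6
  have hβB : ∀ n k : ℕ, 1 ≤ k → k ≤ 6 → |β (n+k)| ≤ (3*(n:ℝ)+24) * (9/10:ℝ)^n := by
    intro n k hk1 hk6
    obtain ⟨j, rfl⟩ : ∃ j, k = j + 1 := ⟨k - 1, by omega⟩
    have e : n + (j+1) = (n+j) + 1 := by omega
    rw [e]
    have h := hβb (n+j)
    have hp : ((9:ℝ)/10)^(n+j) ≤ (9/10:ℝ)^n :=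
      pow_le_pow_of_le_one (by norm_num) (by norm_num) (by omega)
    have hj : (j:ℝ) ≤ 5 := by exact_mod_cast (by omega : j ≤ 5)
    have h3 : (0:ℝ) ≤ (9/10:ℝ)^n := by positivity
    have h4 : (0:ℝ) ≤ (9/10:ℝ)^(n+j) := by positivity
    calc |β ((n+j)+1)| ≤ (3*((n+j:ℕ):ℝ)+6) * (9/10:ℝ)^(n+j) := h
      _ ≤ (3*(n:ℝ)+24) * (9/10:ℝ)^n := by
          push_cast
          have hn : (0:ℝ) ≤ (n:ℝ) := Nat.cast_nonneg n
          have hj0 : (0:ℝ) ≤ (j:ℝ) := Nat.cast_nonneg j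
          nlinarith
  intro x hx
  obtain ⟨hx0, hx1⟩ := hx
  have hxp : ∀ k : ℕ, |x ^ k| ≤ 1 := by
    intro k
    rw [abs_pow, abs_of_nonneg hx0]
    exact pow_le_one₀ hx0 hx1
  -- summability
  have hs1 : Summable (fun n : ℕ => (n:ℝ) * (9/10:ℝ)^n) := by
    simpa using summable_pow_mul_geometric_of_norm_lt_one 1
      (by rw [Real.norm_eq_abs, abs_of_nonneg (by norm_num : (0:ℝ) ≤ 9/10)]; norm_num : ‖(9/10:ℝ)‖ < 1)
  have hs0 : Summable (fun n : ℕ => ((9:ℝ)/10)^n) :=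
    summable_geometric_of_lt_one (by norm_num) (by norm_num)
  have hsB : Summable (fun n : ℕ => (3*(n:ℝ)+24) * (9/10:ℝ)^n) :=
    (((hs1.mul_left 3).add (hs0.mul_left 24)).congr (fun n => by ring))
  have htermb : ∀ n : ℕ, |β (n+1) * x^(n+1)| ≤ (3*(n:ℝ)+24) * (9/10:ℝ)^n := by
    intro n
    rw [abs_mul]
    have h1 := hβb n
    have h2 := hxp (n+1)
    have h3 : (0:ℝ) ≤ (9/10:ℝ)^n := by positivity
    nlinarith [abs_nonneg (β (n+1)), abs_nonneg (x^(n+1)),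
      mul_le_mul h1 h2 (abs_nonneg _) (by positivity : (0:ℝ) ≤ (3*(n:ℝ)+6) * (9/10:ℝ)^n)]
  have hsabs : Summable (fun i : ℕ => |β (i + 1) * x ^ (i + 1)|) :=
    Summable.of_nonneg_of_le (fun n => abs_nonneg _) htermb hsB
  have hsum : Summable (fun i : ℕ => β (i + 1) * x ^ (i + 1)) := hsabs.of_abs
  refine ⟨hsabs, ?_⟩
  -- the β-recurrence
  have hβrec : ∀ n : ℕ, 9*β (n+7) - 18*β (n+6) + 27*β (n+5) - 24*β (n+4)
      + 15*β (n+3) - 6*β (n+2) + β (n+1) = 0 := by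
    intro n
    have h4 := hr n
    have h5 := hr (n+1)
    have h6 := hr (n+2)
    have h7 := hr (n+3)
    rw [show n+1+4 = n+5 from by omega, show n+1+3 = n+4 from by omega,
        show n+1+2 = n+3 from by omega, show n+1+1 = n+2 from by omega] at h5
    rw [show n+2+4 = n+6 from by omega, show n+2+3 = n+5 from by omega,
        show n+2+2 = n+4 from by omega, show n+2+1 = n+3 from by omega] at h6
    rw [show n+3+4 = n+7 from by omega, show n+3+3 = n+6 from by omega,
        show n+3+2 = n+5 from by omega, show n+3+1 = n+4 from by omega] at h7
    simp only [hβ]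
    push_cast
    linear_combination (9*(n:ℝ)+72) * h7 + (-(9*(n:ℝ))-54) * h6
      + (9*(n:ℝ)+36) * h5 + (-(3*(n:ℝ))-6) * h4
  -- partial-sum identity
  have key : ∀ n : ℕ, (3 - 3*x + 3*x^2 - x^3)^2 * (∑ i ∈ Finset.range n, β (i+1) * x^(i+1))
      = (3/2)*(3*x - 3*x^2 + x^3) + x^(n+1) * auxE β x n := by
    intro n
    induction n with
    | zero =>
        have hc4 : c 4 = -(1/6) := by
          have := hr 0; rw [hc1, hc2, hc3] at this; norm_num at this; linarith
        have hc5 : c 5 = -(1/36) := by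
          have := hr 1; rw [hc2, hc3, hc4] at this; norm_num at this; linarith
        have hc6 : c 6 = 1/9 := by
          have := hr 2; rw [hc3, hc4, hc5] at this; norm_num at this; linarith
        simp only [Finset.range_zero, Finset.sum_empty, mul_zero, auxE]
        norm_num [hβ, hc1, hc2, hc3, hc4, hc5, hc6]
        ring
    | succ n ih =>
        rw [Finset.sum_range_succ, mul_add, ih]
        have hb := hβrec n
        simp only [auxE]
        rw [show n+1+1 = n+2 from by omega, show n+1+2 = n+3 from by omega,
            show n+1+3 = n+4 from by omega, show n+1+4 = n+5 from by omega,
            show n+1+5 = n+6 from by omega, show n+1+6 = n+7 from by omega]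
        linear_combination x^(n+7) * hb
  -- bound on the error term
  have hEb : ∀ n : ℕ, ‖x^(n+1) * auxE β x n‖ ≤ 360 * ((3*(n:ℝ)+24) * (9/10:ℝ)^n) := by
    intro n
    set B : ℝ := (3*(n:ℝ)+24) * (9/10:ℝ)^n with hBdef
    have hB : 0 ≤ B := by positivity
    have b1 := abs_le.mp (hβB n 1 (by omega) (by omega))
    have b2 := abs_le.mp (hβB n 2 (by omega) (by omega))
    have b3 := abs_le.mp (hβB n 3 (by omega) (by omega))
    have b4 := abs_le.mp (hβB n 4 (by omega) (by omega))
    have b5 := abs_le.mp (hβB n 5 (by omega) (by omega))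
    have b6 := abs_le.mp (hβB n 6 (by omega) (by omega))
    have hA0 : |9*β (n+1)| ≤ 9*B :=
      abs_le.mpr ⟨by linarith [b1.1], by linarith [b1.2]⟩
    have hA1 : |9*β (n+2) - 18*β (n+1)| ≤ 27*B :=
      abs_le.mpr ⟨by linarith [b1.2, b2.1], by linarith [b1.1, b2.2]⟩
    have hA2 : |9*β (n+3) - 18*β (n+2) + 27*β (n+1)| ≤ 54*B :=
      abs_le.mpr ⟨by linarith [b1.1, b2.2, b3.1], by linarith [b1.2, b2.1, b3.2]⟩
    have hA3 : |9*β (n+4) - 18*β (n+3) + 27*β (n+2) - 24*β (n+1)| ≤ 78*B :=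
      abs_le.mpr ⟨by linarith [b1.2, b2.1, b3.2, b4.1], by linarith [b1.1, b2.2, b3.1, b4.2]⟩
    have hA4 : |9*β (n+5) - 18*β (n+4) + 27*β (n+3) - 24*β (n+2) + 15*β (n+1)| ≤ 93*B :=
      abs_le.mpr ⟨by linarith [b1.1, b2.2, b3.1, b4.2, b5.1],
        by linarith [b1.2, b2.1, b3.2, b4.1, b5.2]⟩
    have hA5 : |9*β (n+6) - 18*β (n+5) + 27*β (n+4) - 24*β (n+3) + 15*β (n+2) - 6*β (n+1)|
        ≤ 99*B :=
      abs_le.mpr ⟨by linarith [b1.2, b2.1, b3.2, b4.1, b5.2, b6.1],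
        by linarith [b1.1, b2.2, b3.1, b4.2, b5.1, b6.2]⟩
    have hmul : ∀ (k : ℕ) (A bd : ℝ), |A| ≤ bd → |x^k * A| ≤ bd := by
      intro k A bd hA
      rw [abs_mul]
      calc |x^k| * |A| ≤ 1 * |A| :=
            mul_le_mul_of_nonneg_right (hxp k) (abs_nonneg _)
        _ = |A| := one_mul _
        _ ≤ bd := hA
    have h1 := hmul 1 _ _ hA1
    have h2 := hmul 2 _ _ hA2
    have h3 := hmul 3 _ _ hA3
    have h4 := hmul 4 _ _ hA4
    have h5 := hmul 5 _ _ hA5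
    have hEab : |auxE β x n| ≤ 360 * B := by
      simp only [auxE, abs_neg]
      calc |9*β (n+1) + x*(9*β (n+2) - 18*β (n+1))
            + x^2*(9*β (n+3) - 18*β (n+2) + 27*β (n+1))
            + x^3*(9*β (n+4) - 18*β (n+3) + 27*β (n+2) - 24*β (n+1))
            + x^4*(9*β (n+5) - 18*β (n+4) + 27*β (n+3) - 24*β (n+2) + 15*β (n+1))
            + x^5*(9*β (n+6) - 18*β (n+5) + 27*β (n+4) - 24*β (n+3) + 15*β (n+2) - 6*β (n+1))|
          ≤ |9*β (n+1) + x*(9*β (n+2) - 18*β (n+1))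
            + x^2*(9*β (n+3) - 18*β (n+2) + 27*β (n+1))
            + x^3*(9*β (n+4) - 18*β (n+3) + 27*β (n+2) - 24*β (n+1))
            + x^4*(9*β (n+5) - 18*β (n+4) + 27*β (n+3) - 24*β (n+2) + 15*β (n+1))|
            + |x^5*(9*β (n+6) - 18*β (n+5) + 27*β (n+4) - 24*β (n+3) + 15*β (n+2) - 6*β (n+1))| :=
            abs_add_le _ _
        _ ≤ (|9*β (n+1) + x*(9*β (n+2) - 18*β (n+1))
            + x^2*(9*β (n+3) - 18*β (n+2) + 27*β (n+1))
            + x^3*(9*β (n+4) - 18*β (n+3) + 27*β (n+2) - 24*β (n+1))|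
            + |x^4*(9*β (n+5) - 18*β (n+4) + 27*β (n+3) - 24*β (n+2) + 15*β (n+1))|) + _ :=
            add_le_add_left (abs_add_le _ _) _
        _ ≤ ((|9*β (n+1) + x*(9*β (n+2) - 18*β (n+1))
            + x^2*(9*β (n+3) - 18*β (n+2) + 27*β (n+1))|
            + |x^3*(9*β (n+4) - 18*β (n+3) + 27*β (n+2) - 24*β (n+1))|) + _) + _ :=
            add_le_add_left (add_le_add_left (abs_add_le _ _) _) _
        _ ≤ (((|9*β (n+1) + x*(9*β (n+2) - 18*β (n+1))|
            + |x^2*(9*β (n+3) - 18*β (n+2) + 27*β (n+1))|) + _) + _) + _ :=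
            add_le_add_left (add_le_add_left (add_le_add_left (abs_add_le _ _) _) _) _
        _ ≤ ((((|9*β (n+1)| + |x*(9*β (n+2) - 18*β (n+1))|) + _) + _) + _) + _ :=
            add_le_add_left (add_le_add_left (add_le_add_left
              (add_le_add_left (abs_add_le _ _) _) _) _) _
        _ ≤ 360 * B := by
            have h1' : |x*(9*β (n+2) - 18*β (n+1))| ≤ 27*B := by
              have := hmul 1 (9*β (n+2) - 18*β (n+1)) (27*B) hA1
              simpa [pow_one] using this
            linarith [hA0, h1', h2, h3, h4, h5]
    rw [Real.norm_eq_abs, abs_mul]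
    calc |x^(n+1)| * |auxE β x n| ≤ 1 * (360 * B) :=
          mul_le_mul (hxp (n+1)) hEab (abs_nonneg _) one_pos.le
      _ = 360 * B := one_mul _
  -- pass to the limit
  have hmaj : Summable (fun n : ℕ => 360 * ((3*(n:ℝ)+24) * (9/10:ℝ)^n)) := hsB.mul_left 360
  have hE0 : Filter.Tendsto (fun n : ℕ => x^(n+1) * auxE β x n) Filter.atTop (nhds 0) :=
    squeeze_zero_norm hEb hmaj.tendsto_atTop_zero
  have hS : Filter.Tendsto
      (fun n : ℕ => (3 - 3*x + 3*x^2 - x^3)^2 * (∑ i ∈ Finset.range n, β (i+1) * x^(i+1)))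
      Filter.atTop (nhds ((3 - 3*x + 3*x^2 - x^3)^2 * ∑' i : ℕ, β (i + 1) * x ^ (i + 1))) :=
    hsum.hasSum.tendsto_sum_nat.const_mul _
  have hS2 : Filter.Tendsto
      (fun n : ℕ => (3/2)*(3*x - 3*x^2 + x^3) + x^(n+1) * auxE β x n)
      Filter.atTop (nhds ((3/2)*(3*x - 3*x^2 + x^3) + 0)) :=
    tendsto_const_nhds.add hE0
  have hfin : (3 - 3*x + 3*x^2 - x^3)^2 * (∑' i : ℕ, β (i + 1) * x ^ (i + 1))
      = (3/2)*(3*x - 3*x^2 + x^3) + 0 := by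
    refine tendsto_nhds_unique ?_ hS2
    have : (fun n : ℕ => (3 - 3*x + 3*x^2 - x^3)^2 * (∑ i ∈ Finset.range n, β (i+1) * x^(i+1)))
        = (fun n : ℕ => (3/2)*(3*x - 3*x^2 + x^3) + x^(n+1) * auxE β x n) := by
      funext n; exact key n
    rw [← this]
    exact hS
  have hD : (0:ℝ) < 3 - x * (3 - x * (3 - x)) := by nlinarith
  rw [eq_div_iff (by positivity : (3 - x * (3 - x * (3 - x)))^2 ≠ 0)]
  linear_combination hfin
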